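/- Let M ≥ 1 and let χ ∈ W_M^+. Then for every real a ≥ 1 and every t ≤ 0 one has −χ(a·t) ≤ a^M · (−χ(t)). -/

import Mathlib

open MeasureTheory Filter Set

open scoped Topology

noncomputable section

/-- The class `W_M^+` of concave, increasing weights `χ : (-∞,0] → (-∞,0]` with
`χ(0) = 0`, `χ < 0` on `(-∞,0)`, and `|t·χ'(t)| ≤ M·|χ(t)|` at every point `t < 0`
where `χ` is differentiable. -/
def WMPlus (M : ℝ) (χ : ℝ → ℝ) : Prop :=
  ConcaveOn ℝ (Set.Iic 0) χ ∧ StrictMonoOn χ (Set.Iic 0) ∧ (∀ t ≤ (0:ℝ), χ t ≤ 0) ∧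
    χ 0 = 0 ∧ (∀ t < (0:ℝ), χ t < 0) ∧
    ∀ t < (0:ℝ), ∀ d : ℝ, HasDerivAt χ d t → |t * d| ≤ M * |χ t|

theorem stmt9 (M : ℝ) (hM : 1 ≤ M) (χ : ℝ → ℝ) (hχ : WMPlus M χ) :
    ∀ a : ℝ, 1 ≤ a → ∀ t : ℝ, t ≤ 0 → -χ (a * t) ≤ a ^ M * (-χ t) := by
  obtain ⟨hconc, hmono, hnonpos, hzero, hneg, hder⟩ := hχ
  -- continuity of χ on (-∞, 0)
  have hcont : ContinuousOn χ (Iio 0) := by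
    have := hconc.continuousOn_interior
    simpa [interior_Iic] using this
  -- a.e. differentiability
  have hae : ∀ᵐ p, p ∈ Iic (0:ℝ) → DifferentiableWithinAt ℝ χ (Iic 0) p :=
    (hmono.monotoneOn).ae_differentiableWithinAt_of_mem
  have hnull : volume {p : ℝ | ¬ (p ∈ Iic (0:ℝ) →
      DifferentiableWithinAt ℝ χ (Iic 0) p)} = 0 := ae_iff.mp hae
  -- key slope estimate at every point
  have key : ∀ x < (0:ℝ), ∀ z, x < z → z < 0 → slope χ x z ≤ M * (-χ x) / (-x) := by
    intro x hx z hxz hz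
    by_contra hcon
    push_neg at hcon
    set L := slope χ x z with hL
    have hφ : ContinuousAt (fun p : ℝ => M * (-χ p) / (-p)) x := by
      have hcx : ContinuousAt χ x := hcont.continuousAt (Iio_mem_nhds hx)
      exact (continuousAt_const.mul hcx.neg).div continuousAt_id.neg (by
        simpa using ne_of_gt (neg_pos.2 hx))
    have hev : ∀ᶠ p in 𝓝 x, M * (-χ p) / (-p) < L := hφ.eventually_lt_const hcon
    obtain ⟨δ, hδ, hball⟩ := Metric.eventually_nhds_iff.mp hev
    have hex : ∃ p ∈ Ioo (x - δ) x, DifferentiableWithinAt ℝ χ (Iic 0) p := by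
      by_contra h
      push_neg at h
      have hsub : Ioo (x - δ) x ⊆ {p : ℝ | ¬ (p ∈ Iic (0:ℝ) →
          DifferentiableWithinAt ℝ χ (Iic 0) p)} := by
        intro p hp hq
        exact h p hp (hq (le_of_lt (hp.2.trans hx)))
      have h0 := measure_mono_null hsub hnull
      rw [Real.volume_Ioo] at h0
      simp only [ENNReal.ofReal_eq_zero] at h0
      linarith
    obtain ⟨p, hp, hdiffW⟩ := hex
    obtain ⟨hp1, hp2⟩ := hp
    have hp0 : p < 0 := hp2.trans hx
    have hdiff : DifferentiableAt ℝ χ p := hdiffW.differentiableAt (Iic_mem_nhds hp0)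
    have hd : HasDerivAt χ (deriv χ p) p := hdiff.hasDerivAt
    set d := deriv χ p with hdd
    have h1 : slope χ p z ≤ d :=
      hconc.slope_le_of_hasDerivAt hp0.le hz.le (hp2.trans hxz) hd
    have h2 : L ≤ slope χ p z := by
      have ha1 : p ∈ Iic (0:ℝ) \ {z} := ⟨hp0.le, by simp [ne_of_lt (hp2.trans hxz)]⟩
      have ha2 : x ∈ Iic (0:ℝ) \ {z} := ⟨hx.le, by simp [ne_of_lt hxz]⟩
      have := hconc.slope_anti hz.le ha1 ha2 hp2.le
      rwa [slope_comm χ z x, slope_comm χ z p] at this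
    have h3 : d ≤ M * (-χ p) / (-p) := by
      have hb := hder p hp0 d hd
      rw [abs_mul, abs_of_neg hp0, abs_of_neg (hneg p hp0)] at hb
      rw [le_div_iff₀ (by linarith : (0:ℝ) < -p)]
      nlinarith [le_abs_self d, abs_nonneg d]
    have h4 : M * (-χ p) / (-p) < L := by
      apply hball
      rw [Real.dist_eq, abs_of_neg (by linarith : p - x < 0)]
      linarith
    linarith
  -- main statement
  intro a ha t ht
  rcases ht.lt_or_eq with ht' | rfl
  swap
  · simp [hzero]
  have ha0 : (0:ℝ) < a := by linarith
  set x0 := a * t with hx0def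
  have hx0 : x0 < 0 := mul_neg_of_pos_of_neg ha0 ht'
  have hx0t : x0 ≤ t := by nlinarith
  have hCpos : (0:ℝ) < -χ x0 := neg_pos.2 (hneg _ hx0)
  set C := -χ x0 with hCdef
  have main : ∀ M' : ℝ, M < M' → C ≤ a ^ M' * (-χ t) := by
    intro M' hM'
    have hM'pos : (0:ℝ) < M' := by linarith
    have hratio : ∀ s : ℝ, s < 0 → 0 < s / x0 := fun s h2 =>
      div_pos_of_neg_of_neg h2 hx0
    have hIccsub : Icc x0 t ⊆ Iio (0:ℝ) := fun s hs => lt_of_le_of_lt hs.2 ht'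
    have Hf : ContinuousOn χ (Icc x0 t) := hcont.mono hIccsub
    have Hf' : ∀ s ∈ Ico x0 t, ∀ r, M * (-χ s) / (-s) < r →
        ∃ᶠ z in 𝓝[>] s, slope χ s z < r := by
      intro s hs r hr
      have hs0 : s < 0 := hs.2.trans ht'
      have hev : ∀ᶠ z in 𝓝[>] s, z < 0 :=
        ((eventually_lt_nhds hs0).filter_mono nhdsWithin_le_nhds)
      apply Eventually.frequently
      filter_upwards [hev, self_mem_nhdsWithin] with z hz0 hzs
      exact lt_of_le_of_lt (key s hs0 z hzs hz0) hr
    have Ha : χ x0 ≤ -C * (x0 / x0) ^ M' := by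
      rw [div_self (ne_of_lt hx0), Real.one_rpow, mul_one]
      simp [hCdef]
    have HB : ContinuousOn (fun s : ℝ => -C * (s / x0) ^ M') (Icc x0 t) := by
      apply continuousOn_const.mul
      apply ContinuousOn.rpow_const
      · exact continuousOn_id.div_const x0
      · intro s _
        exact Or.inr hM'pos.le
    have HB' : ∀ s ∈ Ico x0 t, HasDerivWithinAt (fun s : ℝ => -C * (s / x0) ^ M')
        (-C * (M' * (s / x0) ^ (M' - 1) / x0)) (Ici s) s := by
      intro s hs
      have hs0 : s < 0 := hs.2.trans ht'
      have h1 : HasDerivAt (fun s : ℝ => s / x0) (1 / x0) s := by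
        simpa using (hasDerivAt_id s).div_const x0
      have h2 := h1.rpow_const (p := M') (Or.inl (ne_of_gt (hratio s hs0)))
      have h3 := h2.const_mul (-C)
      have h4 : HasDerivAt (fun s : ℝ => -C * (s / x0) ^ M')
          (-C * (M' * (s / x0) ^ (M' - 1) / x0)) s := by
        have e : -C * (M' * (s / x0) ^ (M' - 1) / x0) = -C * (1 / x0 * M' * (s / x0) ^ (M' - 1)) := by
          ring
        rw [e]
        exact h3
      exact h4.hasDerivWithinAt
    have Hbound : ∀ s ∈ Ico x0 t, χ s = -C * (s / x0) ^ M' →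
        M * (-χ s) / (-s) < -C * (M' * (s / x0) ^ (M' - 1) / x0) := by
      intro s hs heq
      have hs0 : s < 0 := hs.2.trans ht'
      have hX : (0:ℝ) < (s / x0) ^ (M' - 1) := Real.rpow_pos_of_pos (hratio s hs0) _
      set X := (s / x0) ^ (M' - 1) with hXdef
      have hane : a ≠ 0 := ne_of_gt ha0
      have htne : t ≠ 0 := ne_of_lt ht'
      have hsplit : (s / x0) ^ M' = X * (s / x0) := by
        rw [hXdef, ← Real.rpow_add_one (ne_of_gt (hratio s hs0)) (M' - 1)]
        norm_num
      have hKey2 : -χ s = C * X * (s / x0) := by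
        rw [heq, hsplit]; ring
      have hsne : s ≠ 0 := ne_of_lt hs0
      have hx0ne : x0 ≠ 0 := ne_of_lt hx0
      have e1 : M * (-χ s) / (-s) = M * ((C * X) / (-x0)) := by
        rw [hKey2]
        field_simp
      have e2 : -C * (M' * X / x0) = M' * ((C * X) / (-x0)) := by
        ring
      rw [e1, e2]
      have hfrac : (0:ℝ) < (C * X) / (-x0) :=
        div_pos (mul_pos hCpos hX) (by linarith)
      exact mul_lt_mul_of_pos_right hM' hfrac
    have hchit := image_le_of_liminf_slope_right_lt_deriv_boundary'
      Hf Hf' Ha HB HB' Hbound (right_mem_Icc.2 hx0t)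
    have hane : a ≠ 0 := ne_of_gt ha0
    have htne : t ≠ 0 := ne_of_lt ht'
    have htx0 : t / x0 = 1 / a := by
      rw [hx0def, div_eq_div_iff (mul_ne_zero hane htne) hane]
      ring
    rw [htx0] at hchit
    have hinv : (1 / a : ℝ) ^ M' = (a ^ M')⁻¹ := by
      rw [one_div, Real.inv_rpow ha0.le]
    rw [hinv] at hchit
    have hapos : (0:ℝ) < a ^ M' := Real.rpow_pos_of_pos ha0 _
    have hC' : C * (a ^ M')⁻¹ ≤ -χ t := by linarith
    calc C = C * (a ^ M')⁻¹ * a ^ M' := by field_simp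
      _ ≤ -χ t * a ^ M' := mul_le_mul_of_nonneg_right hC' hapos.le
      _ = a ^ M' * (-χ t) := by ring
  -- take the limit M' → M⁺
  have htend : Tendsto (fun M' : ℝ => a ^ M' * (-χ t)) (𝓝[>] M) (𝓝 (a ^ M * (-χ t))) := by
    have hc : Continuous fun p : ℝ => a ^ p := by
      have : (fun p : ℝ => a ^ p) = fun p => Real.exp (Real.log a * p) := by
        funext p
        rw [Real.rpow_def_of_pos ha0]
      rw [this]
      exact Real.continuous_exp.comp (continuous_const.mul continuous_id)
    exact ((hc.tendsto M).mul tendsto_const_nhds).mono_left nhdsWithin_le_nhds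
  refine ge_of_tendsto htend ?_
  filter_upwards [self_mem_nhdsWithin] with M' hM'
  exact main M' hM'
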